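/- Let D = {z ∈ ℂ : |z| ≤ r} with r > 0 sufficiently small, and let X = {(z², z̄/(1+z̄)) : z ∈ D} ⊂ ℂ². Then R(X) = C(X): every continuous complex-valued function on X can be uniformly approximated on X by rational functions with poles off X. In particular, X is rationally convex. -/

import Mathlib

open Complex MvPolynomial Metric

noncomputable section

/-- `R(K) = C(K)` for `K ⊆ ℂ²` (with `ℂ²` realized as `Fin 2 → ℂ`): every continuous
function on `K` is a uniform limit on `K` of rational functions with poles off `K`. -/
def RatEqC (K : Set (Fin 2 → ℂ)) : Prop :=
  ∀ f : (Fin 2 → ℂ) → ℂ, ContinuousOn f K → ∀ ε : ℝ, 0 < ε →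
    ∃ P Q : MvPolynomial (Fin 2) ℂ, (∀ x ∈ K, eval x Q ≠ 0) ∧
      ∀ x ∈ K, ‖f x - eval x P / eval x Q‖ < ε

/-- The rationally convex hull of `K ⊆ ℂ²`. -/
def RHull (K : Set (Fin 2 → ℂ)) : Set (Fin 2 → ℂ) :=
  {z | ∀ P Q : MvPolynomial (Fin 2) ℂ, (∀ x ∈ K ∪ {z}, eval x Q ≠ 0) →
    ‖eval z P / eval z Q‖ ≤ sSup ((fun w => ‖eval w P / eval w Q‖) '' K)}

/-! ### Auxiliary material -/

/-- The Newton-type iteration `p ↦ p (3 - p²)/2` approximating the constant `1`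
(equivalently the sign function) by odd polynomials. -/
private def pseq : ℕ → ℝ → ℝ
  | 0, s => s
  | (k+1), s => pseq k s * (3 - (pseq k s)^2) / 2

private lemma pseq_succ (k : ℕ) (s : ℝ) :
    pseq (k+1) s = pseq k s * (3 - (pseq k s)^2) / 2 := rfl

private lemma pseq_prop {s : ℝ} (h0 : 0 ≤ s) (h1 : s ≤ 1) (k : ℕ) :
    s ≤ pseq k s ∧ pseq k s ≤ 1 ∧ 1 - pseq k s ≤ (1 - s/2)^k := by
  induction k with
  | zero =>
      refine ⟨le_refl _, h1, ?_⟩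
      simp [pseq]
      linarith
  | succ k ih =>
      obtain ⟨ha, hb, hc⟩ := ih
      have hp0 : 0 ≤ pseq k s := le_trans h0 ha
      refine ⟨?_, ?_, ?_⟩
      · calc s ≤ pseq k s := ha
          _ ≤ pseq (k+1) s := by rw [pseq_succ]; nlinarith
      · rw [pseq_succ]; nlinarith [sq_nonneg (1 - pseq k s)]
      · rw [pseq_succ]
        have key : 1 - pseq k s * (3 - (pseq k s)^2) / 2
            ≤ (1 - pseq k s) * (1 - s/2) := by nlinarith [sq_nonneg (1 - pseq k s)]
        calc 1 - pseq k s * (3 - (pseq k s)^2) / 2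
            ≤ (1 - pseq k s) * (1 - s/2) := key
          _ ≤ (1 - s/2)^k * (1 - s/2) := by
              apply mul_le_mul_of_nonneg_right hc (by linarith)
          _ = (1 - s/2)^(k+1) := by ring

/-- The parametrizing map `z ↦ (z², z̄/(1+z̄))`. -/
private def Phi : ℂ → (Fin 2 → ℂ) :=
  fun z : ℂ => ![z ^ 2, (starRingEnd ℂ) z / (1 + (starRingEnd ℂ) z)]

private lemma Phi_zero (z : ℂ) : Phi z 0 = z ^ 2 := rfl

private lemma Phi_one (z : ℂ) :
    Phi z 1 = (starRingEnd ℂ) z / (1 + (starRingEnd ℂ) z) := rfl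

private lemma den_ne {z : ℂ} (hz : ‖z‖ ≤ 1/2) : 1 + (starRingEnd ℂ) z ≠ 0 := by
  intro h
  have hc : (starRingEnd ℂ) z = -1 := by linear_combination h
  have h1 : ‖(starRingEnd ℂ) z‖ = ‖z‖ := RCLike.norm_conj z
  rw [hc, norm_neg, norm_one] at h1
  rw [← h1] at hz
  norm_num at hz

/-- The subalgebra of `C(D̄, ℂ)` of restrictions to the disk of rational functions
of `(z², z̄/(1+z̄))` with poles off `X`. -/
private def Rsub (r : ℝ) (X : Set (Fin 2 → ℂ)) :
    Subalgebra ℂ C(↥(closedBall (0:ℂ) r), ℂ) where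
  carrier := {g | ∃ P Q : MvPolynomial (Fin 2) ℂ,
    (∀ x ∈ X, eval x Q ≠ 0) ∧ (∀ ζ : ↥(closedBall (0:ℂ) r), eval (Phi ζ) Q ≠ 0) ∧
    ∀ ζ : ↥(closedBall (0:ℂ) r), g ζ = eval (Phi ζ) P / eval (Phi ζ) Q}
  one_mem' := ⟨1, 1, by simp, by simp, by simp⟩
  zero_mem' := ⟨0, 1, by simp, by simp, by simp⟩
  add_mem' := by
    rintro a b ⟨P₁, Q₁, hX1, hK1, hv1⟩ ⟨P₂, Q₂, hX2, hK2, hv2⟩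
    refine ⟨P₁ * Q₂ + Q₁ * P₂, Q₁ * Q₂, ?_, ?_, ?_⟩
    · intro x hx; simp only [eval_mul]; exact mul_ne_zero (hX1 x hx) (hX2 x hx)
    · intro ζ; simp only [eval_mul]; exact mul_ne_zero (hK1 ζ) (hK2 ζ)
    · intro ζ
      simp only [ContinuousMap.add_apply, hv1 ζ, hv2 ζ, eval_add, eval_mul]
      rw [div_add_div _ _ (hK1 ζ) (hK2 ζ)]
  mul_mem' := by
    rintro a b ⟨P₁, Q₁, hX1, hK1, hv1⟩ ⟨P₂, Q₂, hX2, hK2, hv2⟩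
    refine ⟨P₁ * P₂, Q₁ * Q₂, ?_, ?_, ?_⟩
    · intro x hx; simp only [eval_mul]; exact mul_ne_zero (hX1 x hx) (hX2 x hx)
    · intro ζ; simp only [eval_mul]; exact mul_ne_zero (hK1 ζ) (hK2 ζ)
    · intro ζ
      simp only [ContinuousMap.mul_apply, hv1 ζ, hv2 ζ, eval_mul]
      rw [div_mul_div_comm]
  algebraMap_mem' := by
    intro c
    refine ⟨C c, 1, by simp, by simp, ?_⟩
    intro ζ
    rw [Algebra.algebraMap_eq_smul_one]
    simp

private lemma fin2_ext {x w : Fin 2 → ℂ} (h0 : x 0 = w 0) (h1 : x 1 = w 1) : x = w := by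
  funext i
  fin_cases i <;> assumption

/-- If `R(X) = C(X)` for a nonempty compact `X`, then `X` is rationally convex. -/
private lemma rhull_of_ratEqC {X : Set (Fin 2 → ℂ)} (hc : IsCompact X)
    (hne : X.Nonempty) (hR : RatEqC X) : RHull X = X := by
  apply Set.Subset.antisymm
  · -- RHull X ⊆ X
    intro w hw
    by_contra hwX
    -- a uniform bound for the two affine functions on X
    obtain ⟨RR, hRR⟩ := hc.isBounded.subset_closedBall 0
    have hRR0 : 0 ≤ RR := by
      obtain ⟨x, hx⟩ := hne
      have := hRR hx
      rw [mem_closedBall, dist_zero_right] at this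
      exact le_trans (norm_nonneg x) this
    set M : ℝ := RR + ‖w 0‖ + ‖w 1‖ + 1 with hM
    have hM1 : 1 ≤ M := by
      have := norm_nonneg (w 0); have := norm_nonneg (w 1); simp only [hM]; linarith
    have hMb : ∀ x ∈ X, ‖x 0 - w 0‖ ≤ M ∧ ‖x 1 - w 1‖ ≤ M := by
      intro x hx
      have hx' := hRR hx
      rw [mem_closedBall, dist_zero_right] at hx'
      have h0 : ‖x 0‖ ≤ ‖x‖ := norm_le_pi_norm x 0
      have h1 : ‖x 1‖ ≤ ‖x‖ := norm_le_pi_norm x 1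
      have hn0 := norm_nonneg (w 0); have hn1 := norm_nonneg (w 1)
      constructor
      · calc ‖x 0 - w 0‖ ≤ ‖x 0‖ + ‖w 0‖ := norm_sub_le _ _
          _ ≤ M := by simp only [hM]; linarith
      · calc ‖x 1 - w 1‖ ≤ ‖x 1‖ + ‖w 1‖ := norm_sub_le _ _
          _ ≤ M := by simp only [hM]; linarith
    -- the smooth Bezout data
    set D : (Fin 2 → ℂ) → ℝ := fun x => normSq (x 0 - w 0) + normSq (x 1 - w 1) with hD
    have hDpos : ∀ x ∈ X, 0 < D x := by
      intro x hx
      rcases lt_or_eq_of_le (add_nonneg (normSq_nonneg (x 0 - w 0)) (normSq_nonneg (x 1 - w 1))) with h | h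
      · exact h
      · exfalso
        have h0 : normSq (x 0 - w 0) = 0 :=
          le_antisymm (by nlinarith [normSq_nonneg (x 1 - w 1)]) (normSq_nonneg _)
        have h1 : normSq (x 1 - w 1) = 0 :=
          le_antisymm (by nlinarith [normSq_nonneg (x 0 - w 0)]) (normSq_nonneg _)
        rw [normSq_eq_zero, sub_eq_zero] at h0 h1
        exact hwX (fin2_ext h0 h1 ▸ hx)
    have hDC : ∀ x ∈ X, ((D x : ℝ) : ℂ) ≠ 0 :=
      fun x hx => Complex.ofReal_ne_zero.mpr (hDpos x hx).ne'
    set G : (Fin 2 → ℂ) → ℂ := fun x => (starRingEnd ℂ) (x 0 - w 0) / ((D x : ℝ) : ℂ) with hG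
    set H : (Fin 2 → ℂ) → ℂ := fun x => (starRingEnd ℂ) (x 1 - w 1) / ((D x : ℝ) : ℂ) with hH
    have hDcont : ContinuousOn (fun x : Fin 2 → ℂ => ((D x : ℝ) : ℂ)) X := by
      apply Continuous.continuousOn
      apply Complex.continuous_ofReal.comp
      exact (Complex.continuous_normSq.comp ((continuous_apply 0).sub continuous_const)).add
        (Complex.continuous_normSq.comp ((continuous_apply 1).sub continuous_const))
    have hGc : ContinuousOn G X := by
      apply ContinuousOn.div _ hDcont hDC
      exact (Complex.continuous_conj.comp ((continuous_apply 0).sub continuous_const)).continuousOn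
    have hHc : ContinuousOn H X := by
      apply ContinuousOn.div _ hDcont hDC
      exact (Complex.continuous_conj.comp ((continuous_apply 1).sub continuous_const)).continuousOn
    have hεpos : (0:ℝ) < 1/(3*M) := by positivity
    obtain ⟨P₁, Q₁, hQ₁, hA1⟩ := hR G hGc _ hεpos
    obtain ⟨P₂, Q₂, hQ₂, hA2⟩ := hR H hHc _ hεpos
    set Q₀ : MvPolynomial (Fin 2) ℂ :=
      (MvPolynomial.X 0 - C (w 0)) * P₁ * Q₂ + (MvPolynomial.X 1 - C (w 1)) * P₂ * Q₁ with hQ₀def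
    have hevalQ₀ : ∀ x, eval x Q₀ =
        (x 0 - w 0) * eval x P₁ * eval x Q₂ + (x 1 - w 1) * eval x P₂ * eval x Q₁ := by
      intro x; simp [hQ₀def]
    have hwQ₀ : eval w Q₀ = 0 := by rw [hevalQ₀]; simp
    have hXQ₀ : ∀ x ∈ X, eval x Q₀ ≠ 0 := by
      intro x hx
      have h1 := hA1 x hx
      have h2 := hA2 x hx
      obtain ⟨hb0, hb1⟩ := hMb x hx
      have hq1 := hQ₁ x hx
      have hq2 := hQ₂ x hx
      have key : eval x Q₀ = eval x Q₁ * eval x Q₂ *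
          ((x 0 - w 0) * (eval x P₁ / eval x Q₁) + (x 1 - w 1) * (eval x P₂ / eval x Q₂)) := by
        rw [hevalQ₀]; field_simp; try ring
      rw [key]
      apply mul_ne_zero (mul_ne_zero hq1 hq2)
      set S : ℂ := (x 0 - w 0) * (eval x P₁ / eval x Q₁) + (x 1 - w 1) * (eval x P₂ / eval x Q₂)
        with hS
      have hGH : (x 0 - w 0) * G x + (x 1 - w 1) * H x = 1 := by
        simp only [hG, hH]
        rw [mul_div_assoc', mul_div_assoc', ← add_div, Complex.mul_conj, Complex.mul_conj]
        rw [← Complex.ofReal_add]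
        exact div_self (hDC x hx)
      have hS1 : ‖S - 1‖ < 1 := by
        have hrw : S - 1 = (x 0 - w 0) * (eval x P₁ / eval x Q₁ - G x)
            + (x 1 - w 1) * (eval x P₂ / eval x Q₂ - H x) := by
          rw [hS, ← hGH]; ring
        rw [hrw]
        have e1 : ‖(x 0 - w 0) * (eval x P₁ / eval x Q₁ - G x)‖ ≤ M * (1/(3*M)) := by
          rw [norm_mul]
          apply mul_le_mul hb0 _ (norm_nonneg _) (by linarith)
          rw [norm_sub_rev]; exact (h1).le
        have e2 : ‖(x 1 - w 1) * (eval x P₂ / eval x Q₂ - H x)‖ ≤ M * (1/(3*M)) := by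
          rw [norm_mul]
          apply mul_le_mul hb1 _ (norm_nonneg _) (by linarith)
          rw [norm_sub_rev]; exact (h2).le
        have hMne : M ≠ 0 := by linarith
        calc ‖_ + _‖ ≤ ‖(x 0 - w 0) * (eval x P₁ / eval x Q₁ - G x)‖
              + ‖(x 1 - w 1) * (eval x P₂ / eval x Q₂ - H x)‖ := norm_add_le _ _
          _ ≤ M * (1/(3*M)) + M * (1/(3*M)) := add_le_add e1 e2
          _ = 2/3 := by field_simp; ring
          _ < 1 := by norm_num
      intro hS0
      rw [hS0] at hS1
      simp at hS1
    -- the minimum of ‖eval · Q₀‖ on X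
    have hcont : ContinuousOn (fun x => ‖eval x Q₀‖) X :=
      ((MvPolynomial.continuous_eval Q₀).continuousOn).norm
    obtain ⟨x₀, hx₀X, hx₀min⟩ := hc.exists_isMinOn hne hcont
    set δ : ℝ := ‖eval x₀ Q₀‖ with hδdef
    have hδpos : 0 < δ := norm_pos_iff.mpr (hXQ₀ x₀ hx₀X)
    set Qf : MvPolynomial (Fin 2) ℂ := Q₀ + C ((δ/3 : ℝ) : ℂ) with hQf
    have hQfeval : ∀ x, eval x Qf = eval x Q₀ + ((δ/3 : ℝ) : ℂ) := by
      intro x; simp [hQf]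
    have hQfX : ∀ x ∈ X, 2/3 * δ ≤ ‖eval x Qf‖ := by
      intro x hx
      rw [hQfeval]
      have h1 : δ ≤ ‖eval x Q₀‖ := isMinOn_iff.mp hx₀min x hx
      have h2 : ‖eval x Q₀‖ ≤ ‖eval x Q₀ + ((δ/3:ℝ):ℂ)‖ + ‖((δ/3:ℝ):ℂ)‖ := by
        calc ‖eval x Q₀‖ = ‖(eval x Q₀ + ((δ/3:ℝ):ℂ)) - ((δ/3:ℝ):ℂ)‖ := by ring_nf
          _ ≤ _ := norm_sub_le _ _
      have h3 : ‖((δ/3:ℝ):ℂ)‖ = δ/3 := by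
        rw [Complex.norm_real]; exact _root_.abs_of_pos (by linarith)
      rw [h3] at h2
      linarith
    have hQfne : ∀ x ∈ X ∪ {w}, eval x Qf ≠ 0 := by
      rintro x (hx | hx)
      · intro h
        have := hQfX x hx
        rw [h] at this
        simp at this
        linarith
      · rw [Set.mem_singleton_iff] at hx
        subst hx
        rw [hQfeval, hwQ₀, zero_add]
        exact Complex.ofReal_ne_zero.mpr (by linarith)
    have hhull := hw 1 Qf hQfne
    have hLHS : ‖eval w (1 : MvPolynomial (Fin 2) ℂ) / eval w Qf‖ = 3/δ := by
      rw [hQfeval, hwQ₀, zero_add]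
      rw [map_one, norm_div, norm_one, Complex.norm_real, Real.norm_eq_abs,
        _root_.abs_of_pos (by linarith : (0:ℝ) < δ/3), one_div_div]
    have hRHS : sSup ((fun x => ‖eval x (1 : MvPolynomial (Fin 2) ℂ) / eval x Qf‖) '' X)
        ≤ 3/(2*δ) := by
      apply csSup_le (hne.image _)
      rintro y ⟨x, hx, rfl⟩
      have hb := hQfX x hx
      have hpos : 0 < ‖eval x Qf‖ := by linarith
      simp only [map_one, norm_div, norm_one]
      rw [div_le_div_iff₀ hpos (by linarith)]
      linarith
    rw [hLHS] at hhull
    have := le_trans hhull hRHS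
    rw [div_le_div_iff₀ hδpos (by linarith)] at this
    nlinarith
  · -- X ⊆ RHull X
    intro x hx P Q hQ
    have hQX : ∀ y ∈ X, eval y Q ≠ 0 := fun y hy => hQ y (Or.inl hy)
    have hcont : ContinuousOn (fun y => ‖eval y P / eval y Q‖) X :=
      (((MvPolynomial.continuous_eval P).continuousOn).div
        ((MvPolynomial.continuous_eval Q).continuousOn) hQX).norm
    exact le_csSup (hc.bddAbove_image hcont) (Set.mem_image_of_mem _ hx)

/-- For `D` a sufficiently small closed disk centered at the origin and
`X = {(z², z̄/(1+z̄)) : z ∈ D} ⊆ ℂ²`, one has `R(X) = C(X)`; in particular `X` is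
rationally convex. -/
theorem stmt13 :
    ∃ r₀ : ℝ, 0 < r₀ ∧ ∀ r : ℝ, 0 < r → r ≤ r₀ →
      ∀ X : Set (Fin 2 → ℂ),
        X = (fun z : ℂ => ![z ^ 2, (starRingEnd ℂ) z / (1 + (starRingEnd ℂ) z)]) ''
            closedBall (0 : ℂ) r →
        RatEqC X ∧ RHull X = X := by
  refine ⟨1/2, by norm_num, ?_⟩
  intro r hr hr2 X hX
  have hXPhi : X = Phi '' closedBall (0:ℂ) r := hX
  set K : Set ℂ := closedBall (0:ℂ) r with hK
  haveI : CompactSpace ↥K := isCompact_iff_compactSpace.mp (isCompact_closedBall _ _)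
  have hmemK : ∀ ζ : ↥K, ‖(ζ:ℂ)‖ ≤ r := by
    intro ζ
    have h : (ζ:ℂ) ∈ closedBall (0:ℂ) r := ζ.2
    rwa [mem_closedBall, dist_zero_right] at h
  have hden' : ∀ ζ : ↥K, 1 + (starRingEnd ℂ) (ζ:ℂ) ≠ 0 := fun ζ =>
    den_ne (le_trans (hmemK ζ) hr2)
  -- continuity of components
  have hc0 : Continuous (fun ζ : ↥K => ((ζ:ℂ))^2) := continuous_subtype_val.pow 2
  have hccj : Continuous (fun ζ : ↥K => (starRingEnd ℂ) (ζ:ℂ)) :=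
    Complex.continuous_conj.comp continuous_subtype_val
  have hPhiCont : Continuous (fun ζ : ↥K => Phi (ζ:ℂ)) := by
    apply continuous_pi
    intro i
    fin_cases i
    · exact hc0
    · exact Continuous.div hccj (continuous_const.add hccj) (fun ζ => hden' ζ)
  have hXrange : X = Set.range (fun ζ : ↥K => Phi (ζ:ℂ)) := by
    rw [hXPhi, hK]
    exact Set.image_eq_range _ _
  have hXc : IsCompact X := by
    rw [hXrange]
    exact isCompact_range hPhiCont
  have hXne : X.Nonempty := by
    rw [hXPhi]
    exact ⟨Phi 0, 0, mem_closedBall_self hr.le, rfl⟩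
  -- key simplification for the second coordinate
  have hkey : ∀ z : ℂ, ‖z‖ ≤ r →
      (1:ℂ) - (starRingEnd ℂ) z / (1 + (starRingEnd ℂ) z) = 1/(1 + (starRingEnd ℂ) z) := by
    intro z hz
    have hd := den_ne (le_trans hz hr2)
    field_simp; ring
  -- the two basic elements of the algebra
  set sqm : C(↥K, ℂ) := ⟨fun ζ => ((ζ:ℂ))^2, hc0⟩ with hsqm
  set cjm : C(↥K, ℂ) := ⟨fun ζ => (starRingEnd ℂ) (ζ:ℂ), hccj⟩ with hcjm
  have hsqmem : sqm ∈ Rsub r X := by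
    refine ⟨MvPolynomial.X 0, 1, by simp, by simp, ?_⟩
    intro ζ
    simp [hsqm, Phi_zero]
  have hcjmem : cjm ∈ Rsub r X := by
    refine ⟨MvPolynomial.X 1, 1 - MvPolynomial.X 1, ?_, ?_, ?_⟩
    · intro x hx
      rw [hXPhi] at hx
      obtain ⟨z, hz, rfl⟩ := hx
      have hz' : ‖z‖ ≤ r := by rwa [mem_closedBall, dist_zero_right] at hz
      simp only [map_sub, map_one, eval_X, Phi_one]
      rw [hkey z hz']
      exact one_div_ne_zero (den_ne (le_trans hz' hr2))
    · intro ζ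
      simp only [map_sub, map_one, eval_X, Phi_one]
      rw [hkey _ (hmemK ζ)]
      exact one_div_ne_zero (hden' ζ)
    · intro ζ
      have hd := hden' ζ
      simp only [hcjm, ContinuousMap.coe_mk, map_sub, map_one, eval_X, Phi_one]
      rw [hkey _ (hmemK ζ)]
      field_simp
  -- iteration producing the approximation of the identity function
  have hrC : ((r:ℝ) : ℂ) ≠ 0 := Complex.ofReal_ne_zero.mpr hr.ne'
  have hiter : ∀ k : ℕ,
      (∃ u ∈ Rsub r X, ∀ ζ : ↥K,
        u ζ = (ζ:ℂ) * ((pseq k (normSq (ζ:ℂ) / r^2) : ℝ) : ℂ)) ∧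
      (∃ v ∈ Rsub r X, ∀ ζ : ↥K,
        v ζ = (((pseq k (normSq (ζ:ℂ) / r^2) : ℝ) : ℂ))^2) := by
    intro k
    induction k with
    | zero =>
        constructor
        · refine ⟨(((r:ℝ):ℂ)^2)⁻¹ • (sqm * cjm),
            Subalgebra.smul_mem _ (mul_mem hsqmem hcjmem) _, ?_⟩
          intro ζ
          simp only [ContinuousMap.smul_apply, ContinuousMap.mul_apply, hsqm, hcjm,
            ContinuousMap.coe_mk, smul_eq_mul]
          rw [show pseq 0 (normSq (ζ:ℂ)/r^2) = normSq (ζ:ℂ)/r^2 from rfl]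
          push_cast
          rw [← Complex.mul_conj]
          field_simp
        · refine ⟨((((r:ℝ):ℂ)^2)^2)⁻¹ • (sqm * (cjm * cjm)),
            Subalgebra.smul_mem _ (mul_mem hsqmem (mul_mem hcjmem hcjmem)) _, ?_⟩
          intro ζ
          simp only [ContinuousMap.smul_apply, ContinuousMap.mul_apply, hsqm, hcjm,
            ContinuousMap.coe_mk, smul_eq_mul]
          rw [show pseq 0 (normSq (ζ:ℂ)/r^2) = normSq (ζ:ℂ)/r^2 from rfl]
          push_cast
          rw [← Complex.mul_conj]
          field_simp
    | succ k ih =>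
        obtain ⟨⟨u, humem, huval⟩, ⟨v, hvmem, hvval⟩⟩ := ih
        constructor
        · refine ⟨(2⁻¹:ℂ) • (u * ((3:ℂ) • (1 : C(↥K, ℂ)) - v)),
            Subalgebra.smul_mem _
              (mul_mem humem (sub_mem (Subalgebra.smul_mem _ (one_mem _) _) hvmem)) _, ?_⟩
          intro ζ
          simp only [ContinuousMap.smul_apply, ContinuousMap.mul_apply,
            ContinuousMap.sub_apply, ContinuousMap.one_apply, smul_eq_mul,
            huval ζ, hvval ζ, pseq_succ]
          push_cast
          ring
        · refine ⟨(4⁻¹:ℂ) • (v * ((3:ℂ) • (1 : C(↥K, ℂ)) - v)^2),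
            Subalgebra.smul_mem _
              (mul_mem hvmem (pow_mem (sub_mem (Subalgebra.smul_mem _ (one_mem _) _) hvmem) 2)) _, ?_⟩
          intro ζ
          simp only [ContinuousMap.smul_apply, ContinuousMap.mul_apply,
            ContinuousMap.pow_apply, ContinuousMap.sub_apply, ContinuousMap.one_apply,
            smul_eq_mul, hvval ζ, pseq_succ]
          push_cast
          ring
  -- the identity function lies in the closure of the algebra
  set ι : C(↥K, ℂ) := ⟨fun ζ => (ζ:ℂ), continuous_subtype_val⟩ with hι
  have hιmem : ι ∈ closure ((Rsub r X : Subalgebra ℂ C(↥K, ℂ)) : Set C(↥K, ℂ)) := by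
    rw [Metric.mem_closure_iff]
    intro ε hε
    set c : ℝ := min 1 (ε^2/(4*r^2)) with hc
    have hc0 : 0 < c := lt_min one_pos (by positivity)
    have hc1 : c ≤ 1 := min_le_left _ _
    have hq1 : 1 - c/2 < 1 := by linarith
    have hq0 : 0 ≤ 1 - c/2 := by linarith
    obtain ⟨k, hk⟩ := exists_pow_lt_of_lt_one (show (0:ℝ) < ε/(2*r) by positivity) hq1
    obtain ⟨⟨u, humem, huval⟩, -⟩ := hiter k
    refine ⟨u, humem, ?_⟩
    rw [ContinuousMap.dist_lt_iff hε]
    intro ζ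
    set s : ℝ := normSq (ζ:ℂ) / r^2 with hs
    have hzn : ‖(ζ:ℂ)‖ ≤ r := hmemK ζ
    have hnsq : normSq (ζ:ℂ) = ‖(ζ:ℂ)‖^2 := by
      rw [Complex.normSq_eq_norm_sq]
    have hs0 : 0 ≤ s := by
      rw [hs]
      exact div_nonneg (normSq_nonneg _) (by positivity)
    have hs1 : s ≤ 1 := by
      rw [hs, div_le_one (by positivity), hnsq]
      nlinarith [norm_nonneg (ζ:ℂ)]
    obtain ⟨hsp, hp1, hpe⟩ := pseq_prop hs0 hs1 k
    have hval : dist (ι ζ) (u ζ) = ‖(ζ:ℂ)‖ * (1 - pseq k s) := by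
      rw [huval ζ, dist_eq_norm]
      have hrw : (ι ζ) - (ζ:ℂ) * ((pseq k s : ℝ) : ℂ)
          = (ζ:ℂ) * (((1 - pseq k s : ℝ)) : ℂ) := by
        simp only [hι, ContinuousMap.coe_mk]
        push_cast
        ring
      rw [hrw, norm_mul, Complex.norm_real, Real.norm_eq_abs,
        _root_.abs_of_nonneg (show (0:ℝ) ≤ 1 - pseq k s by linarith)]
    rw [hval]
    by_cases hcase : ‖(ζ:ℂ)‖ ≤ ε/2
    · have h1 : ‖(ζ:ℂ)‖ * (1 - pseq k s) ≤ (ε/2) * 1 := by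
        apply mul_le_mul hcase (by linarith) (by linarith) (by positivity)
      linarith
    · push_neg at hcase
      have hsc : c ≤ s := by
        have h6 : (ε/2)^2 ≤ ‖(ζ:ℂ)‖^2 := by nlinarith
        have h1 : ε^2/(4*r^2) ≤ s := by
          rw [hs, hnsq]
          rw [div_le_div_iff₀ (by positivity) (by positivity)]
          nlinarith [mul_le_mul_of_nonneg_right h6 (sq_nonneg r)]
        exact le_trans (min_le_right _ _) h1
      have hmono : (1 - s/2)^k ≤ (1 - c/2)^k := by
        apply pow_le_pow_left₀ (by linarith) (by linarith)
      have h2 : 1 - pseq k s ≤ (1 - c/2)^k := le_trans hpe hmono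
      calc ‖(ζ:ℂ)‖ * (1 - pseq k s) ≤ r * (1 - c/2)^k := by
            apply mul_le_mul hzn h2 (by linarith) hr.le
        _ < r * (ε/(2*r)) := by
            apply mul_lt_mul_of_pos_left hk hr
        _ = ε/2 := by field_simp
        _ < ε := by linarith
  -- Stone–Weierstrass: the closure of the algebra is everything
  have hstar : (star ι : C(↥K, ℂ)) = cjm := by
    ext ζ
    simp [hι, hcjm]
  have hsep : (StarAlgebra.adjoin ℂ ({ι} : Set C(↥K, ℂ))).SeparatesPoints := by
    intro x y hxy
    refine ⟨_, ⟨ι, StarAlgebra.subset_adjoin ℂ _ (Set.mem_singleton ι), rfl⟩, ?_⟩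
    simp only [hι, ContinuousMap.coe_mk]
    exact fun h => hxy (Subtype.ext h)
  have htop := ContinuousMap.starSubalgebra_topologicalClosure_eq_top_of_separatesPoints
    (StarAlgebra.adjoin ℂ ({ι} : Set C(↥K, ℂ))) hsep
  have hadj_le : (StarAlgebra.adjoin ℂ ({ι} : Set C(↥K, ℂ))).toSubalgebra
      ≤ (Rsub r X).topologicalClosure := by
    rw [StarAlgebra.adjoin_toSubalgebra]
    apply Algebra.adjoin_le
    rintro g (hg | hg)
    · rw [Set.mem_singleton_iff] at hg
      subst hg
      have h4 : ι ∈ closure ((Rsub r X : Subalgebra ℂ C(↥K, ℂ)) : Set C(↥K, ℂ)) := hιmem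
      rw [← Subalgebra.topologicalClosure_coe] at h4
      exact h4
    · rw [Set.star_singleton, Set.mem_singleton_iff] at hg
      subst hg
      exact Subalgebra.le_topologicalClosure _ (hstar ▸ hcjmem)
  -- conclude RatEqC
  have hRat : RatEqC X := by
    intro f hf ε hε
    have hmapsto : ∀ ζ : ↥K, Phi (ζ:ℂ) ∈ X := by
      intro ζ
      rw [hXrange]
      exact ⟨ζ, rfl⟩
    have hFc : Continuous (fun ζ : ↥K => f (Phi (ζ:ℂ))) :=
      hf.comp_continuous hPhiCont hmapsto
    set F : C(↥K, ℂ) := ⟨fun ζ => f (Phi (ζ:ℂ)), hFc⟩ with hF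
    have hsetle : ((StarAlgebra.adjoin ℂ ({ι} : Set C(↥K, ℂ)) :
        StarSubalgebra ℂ C(↥K, ℂ)) : Set C(↥K, ℂ))
        ⊆ ((Rsub r X).topologicalClosure : Set C(↥K, ℂ)) := fun g hg => hadj_le hg
    have hFmem : F ∈ closure ((Rsub r X : Subalgebra ℂ C(↥K, ℂ)) : Set C(↥K, ℂ)) := by
      have h1 : F ∈ closure ((StarAlgebra.adjoin ℂ ({ι} : Set C(↥K, ℂ)) :
          StarSubalgebra ℂ C(↥K, ℂ)) : Set C(↥K, ℂ)) := by
        rw [← StarSubalgebra.topologicalClosure_coe, htop]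
        simp
      have h2 := closure_minimal hsetle (Subalgebra.isClosed_topologicalClosure _) h1
      rwa [Subalgebra.topologicalClosure_coe] at h2
    obtain ⟨g, hgmem, hgdist⟩ := Metric.mem_closure_iff.mp hFmem ε hε
    obtain ⟨P, Q, hQX, hQK, hval⟩ := hgmem
    refine ⟨P, Q, hQX, ?_⟩
    intro x hx
    rw [hXrange] at hx
    obtain ⟨ζ, rfl⟩ := hx
    have h1 : f (Phi (ζ:ℂ)) = F ζ := rfl
    have h2 : eval (Phi (ζ:ℂ)) P / eval (Phi (ζ:ℂ)) Q = g ζ := (hval ζ).symm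
    rw [h1, h2, ← dist_eq_norm]
    exact lt_of_le_of_lt (ContinuousMap.dist_apply_le_dist ζ) hgdist
  exact ⟨hRat, rhull_of_ratEqC hXc hXne hRat⟩
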